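/- Let ω > 0 and m ≥ 1, and for λ > 0 define B_λ : [0, ∞) → ℝ by B_λ(x) = (1 + λ^{−1} e^{−x²ω²/2})² (1 + x^{2m}). If for each λ ∈ (0, 1), x₀(λ) is a global minimizer of B_λ on [0, ∞), then lim_{λ→0⁺} x₀(λ)² ω² / (2(−log λ)) = 1; equivalently, x₀(λ)²ω²/2 ∼ −log λ as λ → 0⁺. -/

import Mathlib

open Real Filter

lemma aux_add_rpow {a b p : ℝ} (ha : 0 ≤ a) (hb : 0 ≤ b) (hp : 1 ≤ p) :
    a ^ p + b ^ p ≤ (a + b) ^ p := by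
  have h := NNReal.add_rpow_le_rpow_add a.toNNReal b.toNNReal hp
  have h2 := NNReal.coe_le_coe.2 h
  simpa [NNReal.coe_rpow, ← Real.toNNReal_add ha hb,
    Real.coe_toNNReal a ha, Real.coe_toNNReal b hb,
    Real.coe_toNNReal _ (add_nonneg ha hb)] using h2

lemma aux_neg_log : Tendsto (fun lam : ℝ => -Real.log lam) (nhdsWithin 0 (Set.Ioi 0)) atTop :=
  tendsto_neg_atBot_atTop.comp Real.tendsto_log_nhdsGT_zero

lemma aux_log_div (c : ℝ) (hc : 0 < c) :
    Tendsto (fun x : ℝ => Real.log (1 + c * x) / x) atTop (nhds 0) := by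
  have h1 : Tendsto (fun x : ℝ => Real.log x / x) atTop (nhds 0) := by
    simpa using Real.isLittleO_log_id_atTop.tendsto_div_nhds_zero
  have hu : Tendsto (fun x : ℝ => 1 + c * x) atTop atTop :=
    tendsto_atTop_add_const_left _ 1 (Tendsto.const_mul_atTop hc tendsto_id)
  have h2 : Tendsto (fun x : ℝ => (1 + c * x) / x) atTop (nhds c) := by
    have : Tendsto (fun x : ℝ => 1 / x + c) atTop (nhds (0 + c)) :=
      (tendsto_inv_atTop_zero.congr (fun x => (one_div x).symm)).add tendsto_const_nhds
    rw [zero_add] at this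
    refine this.congr' ?_
    filter_upwards [eventually_gt_atTop (0:ℝ)] with x hx
    field_simp
  have h3 := ((h1.comp hu).mul h2)
  rw [zero_mul] at h3
  refine h3.congr' ?_
  filter_upwards [eventually_gt_atTop (0:ℝ)] with x hx
  have hux : (0:ℝ) < 1 + c * x := by positivity
  field_simp
  rw [Function.comp_apply, div_mul_cancel₀ _ hux.ne']

lemma aux_G (ω m : ℝ) (hω : 0 < ω) :
    Tendsto (fun L : ℝ => 1 - (Real.log 2 + m / 2 * Real.log (1 + 2 / ω ^ 2 * L)) / L)
      atTop (nhds 1) := by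
  have h1 : Tendsto (fun L : ℝ => Real.log 2 / L) atTop (nhds 0) :=
    tendsto_const_nhds.div_atTop tendsto_id
  have h2 := (aux_log_div (2 / ω ^ 2) (by positivity)).const_mul (m / 2)
  rw [mul_zero] at h2
  have h3 := h1.add h2
  rw [add_zero] at h3
  have h4 := (tendsto_const_nhds (x := (1:ℝ))).sub h3
  rw [sub_zero] at h4
  refine h4.congr (fun L => ?_)
  ring

lemma aux_H (ω m : ℝ) (hω : 0 < ω) (hm : 1 ≤ m) :
    Tendsto (fun L : ℝ => ((1 + 1 / L) ^ 2) ^ (m⁻¹) * ((ω ^ 2 / 2 + L + Real.log L) / L))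
      atTop (nhds 1) := by
  have h1 : Tendsto (fun L : ℝ => (1 + 1 / L) ^ 2) atTop (nhds 1) := by
    have : Tendsto (fun L : ℝ => 1 + 1 / L) atTop (nhds (1 + 0)) :=
      tendsto_const_nhds.add (tendsto_inv_atTop_zero.congr fun x => (one_div x).symm)
    rw [add_zero] at this
    simpa using this.pow 2
  have h2 : Tendsto (fun L : ℝ => ((1 + 1 / L) ^ 2) ^ (m⁻¹)) atTop (nhds 1) := by
    have := h1.rpow_const (p := m⁻¹) (Or.inl one_ne_zero)
    simpa using this
  have hlog : Tendsto (fun L : ℝ => Real.log L / L) atTop (nhds 0) := by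
    simpa using Real.isLittleO_log_id_atTop.tendsto_div_nhds_zero
  have h3 : Tendsto (fun L : ℝ => (ω ^ 2 / 2 + L + Real.log L) / L) atTop (nhds 1) := by
    have hc : Tendsto (fun L : ℝ => (ω ^ 2 / 2) / L) atTop (nhds 0) :=
      tendsto_const_nhds.div_atTop tendsto_id
    have := (hc.add hlog).const_add (1:ℝ)
    rw [add_zero, add_zero] at this
    refine this.congr' ?_
    filter_upwards [eventually_gt_atTop (0:ℝ)] with L hL
    field_simp
    ring
  have := h2.mul h3
  rw [one_mul] at this
  exact this

lemma key_ineq (ω m lam x : ℝ) (hω : 0 < ω) (hm : 1 ≤ m) (hlam0 : 0 < lam)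
    (hL1 : 1 ≤ -Real.log lam) (hx : 0 ≤ x)
    (hmin : ∀ t : ℝ, 0 ≤ t →
      (1 + lam⁻¹ * Real.exp (-x ^ 2 * ω ^ 2 / 2)) ^ 2 * (1 + x ^ (2 * m)) ≤
      (1 + lam⁻¹ * Real.exp (-t ^ 2 * ω ^ 2 / 2)) ^ 2 * (1 + t ^ (2 * m))) :
    (1 - (Real.log 2 + m / 2 * Real.log (1 + 2 / ω ^ 2 * (-Real.log lam))) / (-Real.log lam))
      ≤ x ^ 2 * ω ^ 2 / (2 * (-Real.log lam)) ∧
    x ^ 2 * ω ^ 2 / (2 * (-Real.log lam)) ≤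
      ((1 + 1 / (-Real.log lam)) ^ 2) ^ (m⁻¹) *
        ((ω ^ 2 / 2 + (-Real.log lam) + Real.log (-Real.log lam)) / (-Real.log lam)) := by
  set L : ℝ := -Real.log lam with hLdef
  have hL0 : (0:ℝ) < L := lt_of_lt_of_le one_pos hL1
  have hm0 : (0:ℝ) < m := lt_of_lt_of_le one_pos hm
  have hω2 : (0:ℝ) < ω ^ 2 := by positivity
  have hinv : lam⁻¹ = Real.exp L := by
    rw [hLdef, Real.exp_neg, Real.exp_log hlam0]
  have hpow : ∀ t : ℝ, 0 ≤ t → t ^ (2 * m) = (t ^ 2) ^ m := fun t ht => by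
    rw [Real.rpow_mul ht, Real.rpow_two]
  have hexpy : lam⁻¹ * Real.exp (-x ^ 2 * ω ^ 2 / 2)
      = Real.exp (L - x ^ 2 * ω ^ 2 / 2) := by
    rw [hinv, ← Real.exp_add]; congr 1; ring
  have hgoal_eq : x ^ 2 * ω ^ 2 / (2 * L) = (x ^ 2 * ω ^ 2 / 2) / L := by ring
  constructor
  · -- lower bound
    have ha0 : (0:ℝ) ≤ 2 / ω ^ 2 * L := by positivity
    have ha2 : (Real.sqrt (2 / ω ^ 2 * L)) ^ 2 = 2 / ω ^ 2 * L := Real.sq_sqrt ha0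
    have harg : -(Real.sqrt (2 / ω ^ 2 * L)) ^ 2 * ω ^ 2 / 2 = -L := by
      rw [ha2]; field_simp
    have hBa : (1 + lam⁻¹ * Real.exp (-(Real.sqrt (2 / ω ^ 2 * L)) ^ 2 * ω ^ 2 / 2)) ^ 2 *
        (1 + (Real.sqrt (2 / ω ^ 2 * L)) ^ (2 * m)) = 4 * (1 + (2 / ω ^ 2 * L) ^ m) := by
      rw [harg, hinv, ← Real.exp_add, hpow _ (Real.sqrt_nonneg _), ha2]
      norm_num
    have hFsq : (1 + Real.exp (L - x ^ 2 * ω ^ 2 / 2)) ^ 2 ≤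
        (1 + lam⁻¹ * Real.exp (-x ^ 2 * ω ^ 2 / 2)) ^ 2 * (1 + x ^ (2 * m)) := by
      rw [hexpy]
      refine le_mul_of_one_le_right (sq_nonneg _) ?_
      nlinarith [Real.rpow_nonneg hx (2 * m)]
    have h5 : (1 + Real.exp (L - x ^ 2 * ω ^ 2 / 2)) ^ 2 ≤ 4 * (1 + (2 / ω ^ 2 * L) ^ m) :=
      hFsq.trans ((hmin _ (Real.sqrt_nonneg _)).trans_eq hBa)
    have hqm : (0:ℝ) ≤ (2 / ω ^ 2 * L) ^ m := Real.rpow_nonneg ha0 m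
    have hsq : 1 + Real.exp (L - x ^ 2 * ω ^ 2 / 2) ≤
        2 * Real.sqrt (1 + (2 / ω ^ 2 * L) ^ m) := by
      have h := Real.sqrt_le_sqrt h5
      rwa [Real.sqrt_sq (by positivity),
        show (4:ℝ) * (1 + (2 / ω ^ 2 * L) ^ m) = 2 ^ 2 * (1 + (2 / ω ^ 2 * L) ^ m) by norm_num,
        Real.sqrt_mul (by positivity), Real.sqrt_sq (by norm_num)] at h
    have hsq2 : Real.sqrt (1 + (2 / ω ^ 2 * L) ^ m) ≤ (1 + 2 / ω ^ 2 * L) ^ (m / 2) := by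
      have h1 : 1 + (2 / ω ^ 2 * L) ^ m ≤ (1 + 2 / ω ^ 2 * L) ^ m := by
        have := aux_add_rpow (zero_le_one) ha0 hm
        rwa [Real.one_rpow] at this
      have he : Real.sqrt ((1 + 2 / ω ^ 2 * L) ^ m) = (1 + 2 / ω ^ 2 * L) ^ (m / 2) := by
        rw [Real.sqrt_eq_rpow, ← Real.rpow_mul (by positivity), mul_one_div]
      exact (Real.sqrt_le_sqrt h1).trans_eq he
    have h7 : Real.exp (L - x ^ 2 * ω ^ 2 / 2) ≤ 2 * (1 + 2 / ω ^ 2 * L) ^ (m / 2) := by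
      nlinarith [Real.exp_pos (L - x ^ 2 * ω ^ 2 / 2)]
    have h8 : L - x ^ 2 * ω ^ 2 / 2 ≤ Real.log 2 + m / 2 * Real.log (1 + 2 / ω ^ 2 * L) := by
      have hpos : (0:ℝ) < (1 + 2 / ω ^ 2 * L) ^ (m / 2) := Real.rpow_pos_of_pos (by positivity) _
      have h := Real.log_le_log (Real.exp_pos _) h7
      rwa [Real.log_exp, Real.log_mul two_ne_zero (ne_of_gt hpos),
        Real.log_rpow (by positivity)] at h
    have h12 : (L - (Real.log 2 + m / 2 * Real.log (1 + 2 / ω ^ 2 * L))) / L ≤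
        (x ^ 2 * ω ^ 2 / 2) / L := by
      gcongr
      linarith
    rw [hgoal_eq]
    calc 1 - (Real.log 2 + m / 2 * Real.log (1 + 2 / ω ^ 2 * L)) / L
        = (L - (Real.log 2 + m / 2 * Real.log (1 + 2 / ω ^ 2 * L))) / L := by
          field_simp
      _ ≤ (x ^ 2 * ω ^ 2 / 2) / L := h12
  · -- upper bound
    have hlogL : (0:ℝ) ≤ Real.log L := Real.log_nonneg hL1
    have hs0 : (0:ℝ) < L + Real.log L := by linarith
    have hu0 : (0:ℝ) ≤ 2 / ω ^ 2 * (L + Real.log L) := by positivity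
    have hb2 : (Real.sqrt (2 / ω ^ 2 * (L + Real.log L))) ^ 2
        = 2 / ω ^ 2 * (L + Real.log L) := Real.sq_sqrt hu0
    have harg : -(Real.sqrt (2 / ω ^ 2 * (L + Real.log L))) ^ 2 * ω ^ 2 / 2
        = -(L + Real.log L) := by
      rw [hb2]; field_simp
    have hexpb : lam⁻¹ * Real.exp (-(Real.sqrt (2 / ω ^ 2 * (L + Real.log L))) ^ 2 * ω ^ 2 / 2)
        = 1 / L := by
      rw [harg, hinv, ← Real.exp_add, show L + -(L + Real.log L) = -Real.log L by ring,
        Real.exp_neg, Real.exp_log hL0, one_div]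
    have hBb : (1 + lam⁻¹ *
          Real.exp (-(Real.sqrt (2 / ω ^ 2 * (L + Real.log L))) ^ 2 * ω ^ 2 / 2)) ^ 2 *
        (1 + (Real.sqrt (2 / ω ^ 2 * (L + Real.log L))) ^ (2 * m))
        = (1 + 1 / L) ^ 2 * (1 + (2 / ω ^ 2 * (L + Real.log L)) ^ m) := by
      rw [hexpb, hpow _ (Real.sqrt_nonneg _), hb2]
    have hstep : (x ^ 2) ^ m ≤
        (1 + lam⁻¹ * Real.exp (-x ^ 2 * ω ^ 2 / 2)) ^ 2 * (1 + x ^ (2 * m)) := by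
      rw [hpow x hx]
      have hE : (0:ℝ) ≤ lam⁻¹ * Real.exp (-x ^ 2 * ω ^ 2 / 2) := by positivity
      nlinarith [Real.rpow_nonneg (sq_nonneg x) m, sq_nonneg (lam⁻¹ * Real.exp (-x ^ 2 * ω ^ 2 / 2))]
    have h9 : (x ^ 2) ^ m ≤ (1 + 1 / L) ^ 2 * (1 + (2 / ω ^ 2 * (L + Real.log L)) ^ m) :=
      hstep.trans ((hmin _ (Real.sqrt_nonneg _)).trans_eq hBb)
    have hc0 : (0:ℝ) < (1 + 1 / L) ^ 2 := by positivity
    have hkm : (((1 + 1 / L) ^ 2) ^ (m⁻¹)) ^ m = (1 + 1 / L) ^ 2 :=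
      Real.rpow_inv_rpow hc0.le (ne_of_gt hm0)
    have hk0 : (0:ℝ) < ((1 + 1 / L) ^ 2) ^ (m⁻¹) := Real.rpow_pos_of_pos hc0 _
    have hc1 : (1 + 1 / L) ^ 2 * (1 + (2 / ω ^ 2 * (L + Real.log L)) ^ m) ≤
        (((1 + 1 / L) ^ 2) ^ (m⁻¹) * (1 + 2 / ω ^ 2 * (L + Real.log L))) ^ m := by
      rw [Real.mul_rpow hk0.le (by positivity), hkm]
      refine mul_le_mul_of_nonneg_left ?_ hc0.le
      have := aux_add_rpow (zero_le_one) hu0 hm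
      rwa [Real.one_rpow] at this
    have h10 : x ^ 2 ≤ ((1 + 1 / L) ^ 2) ^ (m⁻¹) * (1 + 2 / ω ^ 2 * (L + Real.log L)) := by
      have h := h9.trans hc1
      exact (Real.rpow_le_rpow_iff (sq_nonneg x) (by positivity) hm0).mp h
    have h11 : x ^ 2 * ω ^ 2 / 2 ≤
        ((1 + 1 / L) ^ 2) ^ (m⁻¹) * (ω ^ 2 / 2 + (L + Real.log L)) := by
      have h := mul_le_mul_of_nonneg_right h10 (le_of_lt (by positivity : (0:ℝ) < ω ^ 2 / 2))
      calc x ^ 2 * ω ^ 2 / 2 = x ^ 2 * (ω ^ 2 / 2) := by ring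
        _ ≤ ((1 + 1 / L) ^ 2) ^ (m⁻¹) * (1 + 2 / ω ^ 2 * (L + Real.log L)) * (ω ^ 2 / 2) := h
        _ = ((1 + 1 / L) ^ 2) ^ (m⁻¹) * (ω ^ 2 / 2 + (L + Real.log L)) := by
            rw [mul_assoc]
            congr 1
            field_simp
    rw [hgoal_eq]
    calc (x ^ 2 * ω ^ 2 / 2) / L
        ≤ (((1 + 1 / L) ^ 2) ^ (m⁻¹) * (ω ^ 2 / 2 + (L + Real.log L))) / L :=
          by gcongr
      _ = ((1 + 1 / L) ^ 2) ^ (m⁻¹) * ((ω ^ 2 / 2 + L + Real.log L) / L) := by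
          rw [mul_div_assoc]; ring_nf

/-- If `x₀(λ)` is a global minimizer over `[0,∞)` of
`B_λ(x) = (1 + λ⁻¹ e^{−x²ω²/2})² (1 + x^{2m})` for each `λ ∈ (0,1)`, then
`x₀(λ)² ω² / 2 ∼ −log λ` as `λ → 0⁺`. -/

theorem stmt_11 (ω m : ℝ) (hω : 0 < ω) (hm : 1 ≤ m)
    (B : ℝ → ℝ → ℝ)
    (hB : ∀ lam x, B lam x =
      (1 + lam⁻¹ * Real.exp (-x ^ 2 * ω ^ 2 / 2)) ^ 2 * (1 + x ^ (2 * m)))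
    (x₀ : ℝ → ℝ)
    (hx₀ : ∀ lam ∈ Set.Ioo (0 : ℝ) 1, x₀ lam ∈ Set.Ici (0 : ℝ) ∧
      ∀ x ∈ Set.Ici (0 : ℝ), B lam (x₀ lam) ≤ B lam x) :
    Tendsto (fun lam : ℝ => (x₀ lam) ^ 2 * ω ^ 2 / (2 * (-Real.log lam)))
      (nhdsWithin 0 (Set.Ioi 0)) (nhds 1) := by
  have hL : Tendsto (fun lam : ℝ => -Real.log lam) (nhdsWithin 0 (Set.Ioi 0)) atTop :=
    tendsto_neg_atBot_atTop.comp Real.tendsto_log_nhdsGT_zero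
  have hGt : Tendsto (fun lam : ℝ =>
      1 - (Real.log 2 + m / 2 * Real.log (1 + 2 / ω ^ 2 * (-Real.log lam))) / (-Real.log lam))
      (nhdsWithin 0 (Set.Ioi 0)) (nhds 1) := (aux_G ω m hω).comp hL
  have hHt : Tendsto (fun lam : ℝ =>
      ((1 + 1 / (-Real.log lam)) ^ 2) ^ (m⁻¹) *
        ((ω ^ 2 / 2 + (-Real.log lam) + Real.log (-Real.log lam)) / (-Real.log lam)))
      (nhdsWithin 0 (Set.Ioi 0)) (nhds 1) := (aux_H ω m hω hm).comp hL
  have hkey : ∀ᶠ lam in nhdsWithin (0:ℝ) (Set.Ioi 0),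
      (1 - (Real.log 2 + m / 2 * Real.log (1 + 2 / ω ^ 2 * (-Real.log lam))) / (-Real.log lam)
        ≤ (x₀ lam) ^ 2 * ω ^ 2 / (2 * (-Real.log lam))) ∧
      ((x₀ lam) ^ 2 * ω ^ 2 / (2 * (-Real.log lam)) ≤
        ((1 + 1 / (-Real.log lam)) ^ 2) ^ (m⁻¹) *
          ((ω ^ 2 / 2 + (-Real.log lam) + Real.log (-Real.log lam)) / (-Real.log lam))) := by
    filter_upwards [Ioo_mem_nhdsGT_of_mem (⟨le_refl (0:ℝ), one_pos⟩ : (0:ℝ) ∈ Set.Ico (0:ℝ) 1),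
      hL.eventually (eventually_ge_atTop (1:ℝ))] with lam hmem hL1
    obtain ⟨hx0, hmin⟩ := hx₀ lam hmem
    exact key_ineq ω m lam (x₀ lam) hω hm hmem.1 hL1 hx0 (fun t ht => by
      have h := hmin t ht
      simpa only [hB] using h)
  exact tendsto_of_tendsto_of_tendsto_of_le_of_le' hGt hHt
    (hkey.mono fun lam h => h.1) (hkey.mono fun lam h => h.2)
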